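/- Let Δ be a natural number with Δ ≥ 25 and let C be a real number with C ≥ (e/(e-1))·Δ. Then |∑_{i=1}^{Δ} 1/(C-i) − log(C/(C-Δ))| ≤ 5/C. -/

import Mathlib

lemma stmt5_reindex (Δ : ℕ) (f : ℕ → ℝ) :
    ∑ i ∈ Finset.Icc 1 Δ, f i = ∑ j ∈ Finset.range Δ, f (j + 1) := by
  rw [← Finset.Ico_add_one_right_eq_Icc, Finset.sum_Ico_eq_sum_range]
  simp [add_comm]

/-- For `Δ ≥ 25` and `C ≥ (e/(e-1))·Δ`,
`|∑_{i=1}^{Δ} 1/(C-i) − log(C/(C-Δ))| ≤ 5/C`. -/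
theorem stmt_5 (Δ : ℕ) (hΔ : 25 ≤ Δ) (C : ℝ)
    (hC : Real.exp 1 / (Real.exp 1 - 1) * Δ ≤ C) :
    |∑ i ∈ Finset.Icc 1 Δ, 1 / (C - i) - Real.log (C / (C - Δ))| ≤ 5 / C := by
  have hE1 : (1:ℝ) < Real.exp 1 := by
    have := Real.exp_one_gt_d9; linarith
  have hEpos : (0:ℝ) < Real.exp 1 - 1 := by linarith
  have hΔR : (25:ℝ) ≤ (Δ:ℝ) := by exact_mod_cast hΔ
  have hC0 : 0 < C := by
    refine lt_of_lt_of_le ?_ hC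
    have : 0 < Real.exp 1 / (Real.exp 1 - 1) := div_pos (by linarith) hEpos
    nlinarith
  -- e * Δ ≤ (e-1) * C
  have h2 : Real.exp 1 * Δ ≤ (Real.exp 1 - 1) * C := by
    rw [div_mul_eq_mul_div, div_le_iff₀ hEpos] at hC
    linarith
  have hCe : C / Real.exp 1 ≤ C - Δ := by
    rw [div_le_iff₀ (by linarith : (0:ℝ) < Real.exp 1)]
    nlinarith
  have hCΔ : 0 < C - Δ := lt_of_lt_of_le (by positivity) hCe
  -- pointwise positivity
  have hpos : ∀ i ∈ Finset.Icc 1 Δ, 0 < C - (i:ℝ) := by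
    intro i hi
    rw [Finset.mem_Icc] at hi
    have : (i:ℝ) ≤ (Δ:ℝ) := by exact_mod_cast hi.2
    linarith
  -- telescoping: ∑ (log (C - i + 1) - log (C - i)) = log (C/(C-Δ))
  have hT : ∑ i ∈ Finset.Icc 1 Δ,
      (Real.log (C - (i:ℝ) + 1) - Real.log (C - (i:ℝ))) = Real.log (C / (C - Δ)) := by
    rw [stmt5_reindex]
    have : ∀ j ∈ Finset.range Δ,
        Real.log (C - ((j:ℕ)+1 : ℕ) + 1) - Real.log (C - ((j:ℕ)+1 : ℕ))
        = (fun n : ℕ => Real.log (C - n)) j - (fun n : ℕ => Real.log (C - n)) (j+1) := by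
      intro j _
      push_cast
      ring_nf
    rw [Finset.sum_congr rfl this, Finset.sum_range_sub' (fun n : ℕ => Real.log (C - n))]
    simp only [Nat.cast_zero, sub_zero]
    rw [Real.log_div hC0.ne' hCΔ.ne']
  -- telescoping upper bound sum
  have hU : ∑ i ∈ Finset.Icc 1 Δ,
      (1 / (C - (i:ℝ)) - 1 / (C - (i:ℝ) + 1)) = 1 / (C - Δ) - 1 / C := by
    rw [stmt5_reindex]
    have : ∀ j ∈ Finset.range Δ,
        1 / (C - ((j:ℕ)+1 : ℕ)) - 1 / (C - ((j:ℕ)+1 : ℕ) + 1)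
        = (fun n : ℕ => 1 / (C - n)) (j+1) - (fun n : ℕ => 1 / (C - n)) j := by
      intro j _
      push_cast
      ring_nf
    rw [Finset.sum_congr rfl this, Finset.sum_range_sub (fun n : ℕ => 1 / (C - n))]
    simp
  -- per-term bounds
  have hterm : ∀ i ∈ Finset.Icc 1 Δ,
      0 ≤ 1 / (C - (i:ℝ)) - (Real.log (C - (i:ℝ) + 1) - Real.log (C - (i:ℝ)))
      ∧ 1 / (C - (i:ℝ)) - (Real.log (C - (i:ℝ) + 1) - Real.log (C - (i:ℝ)))
        ≤ 1 / (C - (i:ℝ)) - 1 / (C - (i:ℝ) + 1) := by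
    intro i hi
    set x := C - (i:ℝ) with hx
    have hx0 : 0 < x := hpos i hi
    have hx1 : 0 < x + 1 := by linarith
    have hup : Real.log (x + 1) - Real.log x ≤ 1 / x := by
      have h := Real.log_le_sub_one_of_pos (div_pos hx1 hx0)
      rw [Real.log_div hx1.ne' hx0.ne'] at h
      have : (x + 1) / x - 1 = 1 / x := by field_simp; ring
      linarith [this ▸ h]
    have hlo : 1 / (x + 1) ≤ Real.log (x + 1) - Real.log x := by
      have h := Real.log_le_sub_one_of_pos (div_pos hx0 hx1)
      rw [Real.log_div hx0.ne' hx1.ne'] at h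
      have : x / (x + 1) - 1 = -(1 / (x + 1)) := by field_simp; ring
      linarith [this ▸ h]
    exact ⟨by linarith, by linarith⟩
  -- combine
  have hsum_eq : ∑ i ∈ Finset.Icc 1 Δ, 1 / (C - (i:ℝ)) - Real.log (C / (C - Δ))
      = ∑ i ∈ Finset.Icc 1 Δ,
        (1 / (C - (i:ℝ)) - (Real.log (C - (i:ℝ) + 1) - Real.log (C - (i:ℝ)))) := by
    rw [Finset.sum_sub_distrib, hT]
  have hnonneg : 0 ≤ ∑ i ∈ Finset.Icc 1 Δ, 1 / (C - (i:ℝ)) - Real.log (C / (C - Δ)) := by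
    rw [hsum_eq]
    exact Finset.sum_nonneg fun i hi => (hterm i hi).1
  have hle : ∑ i ∈ Finset.Icc 1 Δ, 1 / (C - (i:ℝ)) - Real.log (C / (C - Δ))
      ≤ 1 / (C - Δ) - 1 / C := by
    rw [hsum_eq, ← hU]
    exact Finset.sum_le_sum fun i hi => (hterm i hi).2
  rw [abs_of_nonneg hnonneg]
  have hrec : 1 / (C - Δ) ≤ Real.exp 1 / C := by
    rw [div_le_div_iff₀ hCΔ hC0]
    have := mul_le_mul_of_nonneg_left hCe (Real.exp_pos 1).le
    rw [mul_div_cancel₀ C (Real.exp_pos 1).ne'] at this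
    linarith
  have : Real.exp 1 / C - 1 / C ≤ 5 / C := by
    rw [div_sub_div_same, div_le_div_iff₀ hC0 hC0]
    nlinarith [Real.exp_one_lt_d9]
  linarith
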